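/- Let y ↦ P(X | Y=y) be an L-Lipschitz Markov kernel and z ↦ P(Y | Z=z) an M-Lipschitz Markov kernel (in the bounded Lipschitz metric on the target space of probability measures). Then the composed kernel z ↦ P(X|Y) ∘ P(Y|Z=z), sending z to the law D ↦ ∫ P(X ∈ D | Y=y) dP(y|Z=z), is max{1, L}·M-Lipschitz. -/

import Mathlib

open MeasureTheory ProbabilityTheory
open scoped ENNReal

/-- Bounded Lipschitz distance on a metric space. -/
noncomputable def BLdist {α : Type*} [MeasurableSpace α] [PseudoMetricSpace α]
    (μ ν : Measure α) : ℝ :=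
  sSup {r | ∃ f : α → ℝ, (∀ a, |f a| ≤ 1) ∧ LipschitzWith 1 f ∧
    r = |(∫ a, f a ∂μ) - ∫ a, f a ∂ν|}

lemma integrable_of_abs_le_one {α : Type*} [MeasurableSpace α] (μ : Measure α)
    [IsProbabilityMeasure μ] {f : α → ℝ} (hf : Measurable f) (hb : ∀ x, |f x| ≤ 1) :
    Integrable f μ :=
  ⟨hf.aestronglyMeasurable,
    HasFiniteIntegral.of_bounded (C := 1) (ae_of_all μ fun x => by
      simpa [Real.norm_eq_abs] using hb x)⟩

lemma abs_integral_le_one {α : Type*} [MeasurableSpace α] (μ : Measure α)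
    [IsProbabilityMeasure μ] {f : α → ℝ} (hb : ∀ x, |f x| ≤ 1) :
    |∫ x, f x ∂μ| ≤ 1 := by
  have := norm_integral_le_of_norm_le_const (μ := μ) (f := f) (C := 1)
    (ae_of_all μ fun x => by simpa [Real.norm_eq_abs] using hb x)
  simpa [Real.norm_eq_abs] using this

/-- For a probability measure, the integral of a function bounded by 1 can be
written via the lintegral of `f + 1`. -/
lemma integral_eq_lintegral_shift {α : Type*} [MeasurableSpace α] (μ : Measure α)
    [IsProbabilityMeasure μ] {f : α → ℝ} (hf : Measurable f) (hb : ∀ x, |f x| ≤ 1) :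
    ∫ x, f x ∂μ = (∫⁻ x, ENNReal.ofReal (f x + 1) ∂μ).toReal - 1 := by
  have hint : Integrable f μ := integrable_of_abs_le_one μ hf hb
  have h1 : ∫ x, (f x + 1) ∂μ = (∫⁻ x, ENNReal.ofReal (f x + 1) ∂μ).toReal := by
    rw [integral_eq_lintegral_of_nonneg_ae (f := fun x => f x + 1) (ae_of_all μ fun x => by
      simp only [Pi.zero_apply]; have := (abs_le.mp (hb x)).1; linarith)
      ((hf.add measurable_const).aestronglyMeasurable)]
  have h2 : ∫ x, (f x + 1) ∂μ = (∫ x, f x ∂μ) + 1 := by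
    rw [integral_add hint (integrable_const 1)]
    simp
  linarith [h1, h2]

/-- Bochner integral over `μ.bind κ` of a bounded measurable function. -/
lemma integral_bind_of_bounded {Y X : Type*} [MeasurableSpace Y] [MeasurableSpace X]
    (μ : Measure Y) [IsProbabilityMeasure μ] (κ : Kernel Y X) [IsMarkovKernel κ]
    {f : X → ℝ} (hf : Measurable f) (hb : ∀ x, |f x| ≤ 1) :
    ∫ x, f x ∂(μ.bind κ) = ∫ y, ∫ x, f x ∂(κ y) ∂μ := by
  have hbind : IsProbabilityMeasure (μ.bind κ) := by
    constructor
    rw [Measure.bind_apply MeasurableSet.univ (Kernel.measurable κ).aemeasurable]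
    simp
  have hg : Measurable fun x => ENNReal.ofReal (f x + 1) :=
    (hf.add measurable_const).ennreal_ofReal
  -- inner lintegral function
  set F : Y → ℝ≥0∞ := fun y => ∫⁻ x, ENNReal.ofReal (f x + 1) ∂(κ y) with hF
  have hFmeas : Measurable F := Measurable.lintegral_kernel hg
  have hFle : ∀ y, F y ≤ 2 := by
    intro y
    calc F y ≤ ∫⁻ _, (2 : ℝ≥0∞) ∂(κ y) := by
          refine lintegral_mono fun x => ?_
          have := (abs_le.mp (hb x)).2
          calc ENNReal.ofReal (f x + 1) ≤ ENNReal.ofReal 2 := by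
                exact ENNReal.ofReal_le_ofReal (by linarith)
            _ = 2 := by norm_num
      _ = 2 := by simp
  have hFlt : ∀ y, F y < ⊤ := fun y => lt_of_le_of_lt (hFle y) (by norm_num)
  have hFne : ∀ y, F y ≠ ⊤ := fun y => (hFlt y).ne
  -- left-hand side
  have hL : ∫ x, f x ∂(μ.bind κ) = (∫⁻ y, F y ∂μ).toReal - 1 := by
    rw [integral_eq_lintegral_shift (μ.bind κ) hf hb,
      Measure.lintegral_bind (Kernel.measurable κ).aemeasurable hg.aemeasurable]
  -- each inner integral
  have hinner : ∀ y, ∫ x, f x ∂(κ y) = (F y).toReal - 1 := fun y =>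
    integral_eq_lintegral_shift (κ y) hf hb
  -- right-hand side
  have hRmeas : Measurable fun y => (F y).toReal := hFmeas.ennreal_toReal
  have hRint : Integrable (fun y => (F y).toReal) μ := by
    refine ⟨hRmeas.aestronglyMeasurable,
      HasFiniteIntegral.of_bounded (C := 2) (ae_of_all μ fun y => ?_)⟩
    rw [Real.norm_eq_abs, abs_of_nonneg ENNReal.toReal_nonneg]
    have := hFle y
    calc (F y).toReal ≤ ((2 : ℝ≥0∞)).toReal := ENNReal.toReal_mono (by norm_num) this
      _ = 2 := by norm_num
  have hR : ∫ y, ∫ x, f x ∂(κ y) ∂μ = (∫⁻ y, F y ∂μ).toReal - 1 := by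
    calc ∫ y, ∫ x, f x ∂(κ y) ∂μ = ∫ y, ((F y).toReal - 1) ∂μ := by
          exact integral_congr_ae (ae_of_all μ hinner)
      _ = (∫ y, (F y).toReal ∂μ) - ∫ _, (1 : ℝ) ∂μ :=
          integral_sub hRint (integrable_const 1)
      _ = (∫⁻ y, F y ∂μ).toReal - 1 := by
          rw [integral_toReal hFmeas.aemeasurable (ae_of_all μ hFlt)]
          simp
  rw [hL, hR]

lemma abs_sub_integral_le_BLdist {α : Type*} [MeasurableSpace α] [PseudoMetricSpace α]
    (μ ν : Measure α) [IsProbabilityMeasure μ] [IsProbabilityMeasure ν]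
    {f : α → ℝ} (hb : ∀ a, |f a| ≤ 1) (hLip : LipschitzWith 1 f) :
    |(∫ a, f a ∂μ) - ∫ a, f a ∂ν| ≤ BLdist μ ν := by
  apply le_csSup
  · refine ⟨2, fun r hr => ?_⟩
    obtain ⟨g, hg1, _, rfl⟩ := hr
    have h1 := abs_integral_le_one μ hg1
    have h2 := abs_integral_le_one ν hg1
    calc |(∫ a, g a ∂μ) - ∫ a, g a ∂ν| ≤ |∫ a, g a ∂μ| + |∫ a, g a ∂ν| :=
        abs_sub _ _
      _ ≤ 2 := by linarith
  · exact ⟨f, hb, hLip, rfl⟩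

/-- The composition of an `L`-Lipschitz Markov kernel `P(X|Y)` with an `M`-Lipschitz
Markov kernel `P(Y|Z)` is `max{1, L}·M`-Lipschitz. -/
theorem stmt_15 {X Y Z : Type*}
    [MetricSpace X] [MeasurableSpace X] [BorelSpace X]
    [MetricSpace Y] [MeasurableSpace Y] [BorelSpace Y]
    [MetricSpace Z] [MeasurableSpace Z] [BorelSpace Z]
    (κ : Kernel Y X) [IsMarkovKernel κ] (η : Kernel Z Y) [IsMarkovKernel η]
    (L M : ℝ) (hL : 0 ≤ L) (hM : 0 ≤ M)
    (hκ : ∀ y y' : Y, BLdist (κ y) (κ y') ≤ L * dist y y')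
    (hη : ∀ z z' : Z, BLdist (η z) (η z') ≤ M * dist z z') :
    ∀ z z' : Z, BLdist ((κ.comp η) z) ((κ.comp η) z') ≤ (max 1 L * M) * dist z z' := by
  intro z z'
  set K : ℝ := max 1 L with hK
  have hK1 : (1 : ℝ) ≤ K := le_max_left _ _
  have hK0 : (0 : ℝ) < K := lt_of_lt_of_le one_pos hK1
  apply Real.sSup_le
  · rintro r ⟨f, hf1, hfLip, rfl⟩
    have hfMeas : Measurable f := hfLip.continuous.measurable
    -- the auxiliary function g
    set g : Y → ℝ := fun y => K⁻¹ * ∫ x, f x ∂(κ y) with hg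
    have hg1 : ∀ y, |g y| ≤ 1 := by
      intro y
      rw [hg]
      have h1 := abs_integral_le_one (κ y) hf1
      rw [abs_mul, abs_of_nonneg (inv_nonneg.mpr hK0.le)]
      calc K⁻¹ * |∫ x, f x ∂(κ y)| ≤ K⁻¹ * 1 := by
            exact mul_le_mul_of_nonneg_left h1 (inv_nonneg.mpr hK0.le)
        _ ≤ 1 := by
            rw [mul_one]
            exact inv_le_one_of_one_le₀ hK1
    have hgLip : LipschitzWith 1 g := by
      apply LipschitzWith.of_dist_le_mul
      intro y y'
      have hbl := abs_sub_integral_le_BLdist (κ y) (κ y') hf1 hfLip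
      have h1 : dist (g y) (g y') = K⁻¹ * |(∫ x, f x ∂(κ y)) - ∫ x, f x ∂(κ y')| := by
        rw [hg, Real.dist_eq, ← mul_sub, abs_mul, abs_of_nonneg (inv_nonneg.mpr hK0.le)]
      rw [h1]
      have h2 : |(∫ x, f x ∂(κ y)) - ∫ x, f x ∂(κ y')| ≤ L * dist y y' :=
        le_trans hbl (hκ y y')
      have h3 : K⁻¹ * (L * dist y y') ≤ 1 * dist y y' := by
        rw [one_mul, ← mul_assoc]
        have : K⁻¹ * L ≤ 1 := by
          rw [inv_mul_le_iff₀ hK0, mul_one]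
          exact le_max_right _ _
        exact mul_le_of_le_one_left dist_nonneg this |>.trans (le_refl _) |>.trans
          (by nlinarith [dist_nonneg (x := y) (y := y')])
      calc K⁻¹ * |(∫ x, f x ∂(κ y)) - ∫ x, f x ∂(κ y')| ≤ K⁻¹ * (L * dist y y') :=
            mul_le_mul_of_nonneg_left h2 (inv_nonneg.mpr hK0.le)
        _ ≤ 1 * dist y y' := h3
    -- rewrite the composed integrals
    have hcomp : ∀ w : Z, ∫ x, f x ∂((κ.comp η) w) = K * ∫ y, g y ∂(η w) := by
      intro w
      rw [Kernel.comp_apply, integral_bind_of_bounded (η w) κ hfMeas hf1]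
      rw [hg]
      rw [integral_const_mul, ← mul_assoc, mul_inv_cancel₀ hK0.ne', one_mul]
    have hbl2 := abs_sub_integral_le_BLdist (η z) (η z') hg1 hgLip
    calc |(∫ x, f x ∂((κ.comp η) z)) - ∫ x, f x ∂((κ.comp η) z')|
        = K * |(∫ y, g y ∂(η z)) - ∫ y, g y ∂(η z')| := by
          rw [hcomp z, hcomp z', ← mul_sub, abs_mul, abs_of_nonneg hK0.le]
      _ ≤ K * (M * dist z z') :=
          mul_le_mul_of_nonneg_left (le_trans hbl2 (hη z z')) hK0.le
      _ = (K * M) * dist z z' := by ring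
  · positivity
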